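/- Approximate Carathéodory theorem: Let P ⊆ ℝ^d be a finite nonempty set and let ε ∈ (0,1). For every point x ∈ conv(P) there exists a point x' that is a convex combination of at most ⌈1/ε²⌉ points of P such that ‖x − x'‖ ≤ ε·diam(P). -/

import Mathlib

open Metric

private lemma exists_le_avg {ι : Type*} (s : Finset ι) (w q : ι → ℝ)
    (hw0 : ∀ i ∈ s, 0 ≤ w i) (hw1 : ∑ i ∈ s, w i = 1) :
    ∃ a ∈ s, q a ≤ ∑ i ∈ s, w i * q i := by
  by_contra h
  push_neg at h
  obtain ⟨a, ha, hwa⟩ : ∃ a ∈ s, w a ≠ 0 := by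
    by_contra h'
    push_neg at h'
    simp [Finset.sum_congr rfl fun i hi => h' i hi] at hw1
  set S := ∑ i ∈ s, w i * q i with hS
  have : ∑ i ∈ s, w i * S < ∑ i ∈ s, w i * q i := by
    refine Finset.sum_lt_sum (fun i hi => ?_) ⟨a, ha, ?_⟩
    · rcases eq_or_lt_of_le (hw0 i hi) with h0 | h0
      · simp [← h0]
      · exact mul_le_mul_of_nonneg_left (le_of_lt (h i hi)) (le_of_lt h0)
    · exact mul_lt_mul_of_pos_left (h a ha) (lt_of_le_of_ne (hw0 a ha) (Ne.symm hwa))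
  rw [← Finset.sum_mul, hw1, one_mul] at this
  exact lt_irrefl _ this

private lemma maurey {E : Type*} [NormedAddCommGroup E] [InnerProductSpace ℝ E]
    (P : Finset E) (w : E → ℝ) (hw0 : ∀ a ∈ P, 0 ≤ w a) (hw1 : ∑ a ∈ P, w a = 1)
    (x : E) (hx : ∑ a ∈ P, w a • a = x) (n : ℕ) (hn : 1 ≤ n) :
    ∃ p : Fin n → E, (∀ i, p i ∈ P) ∧
      ‖x - (n : ℝ)⁻¹ • ∑ i, p i‖ ^ 2 ≤ (∑ a ∈ P, w a * ‖x - a‖ ^ 2) / n := by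
  set σ2 := ∑ a ∈ P, w a * ‖x - a‖ ^ 2 with hσ2
  have hσ2nn : 0 ≤ σ2 := Finset.sum_nonneg fun a ha =>
    mul_nonneg (hw0 a ha) (sq_nonneg _)
  have hzero : ∑ a ∈ P, w a • (x - a) = 0 := by
    simp only [smul_sub, Finset.sum_sub_distrib, hx, ← Finset.sum_smul, hw1, one_smul,
      sub_self]
  -- inner product of any e with the weighted deviations is 0
  have hinner : ∀ e : E, ∑ a ∈ P, w a * (inner ℝ e (x - a) : ℝ) = 0 := by
    intro e
    have : ∑ a ∈ P, w a * (inner ℝ e (x - a) : ℝ)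
        = inner ℝ e (∑ a ∈ P, w a • (x - a)) := by
      rw [inner_sum]
      exact Finset.sum_congr rfl fun a _ => (real_inner_smul_right e _ _).symm
    rw [this, hzero, inner_zero_right]
  induction n with
  | zero => omega
  | succ n ih =>
    rcases Nat.eq_zero_or_pos n with hn0 | hn1
    · -- base case n+1 = 1
      subst hn0
      obtain ⟨a, ha, hqa⟩ := exists_le_avg P w (fun a => ‖x - a‖ ^ 2) hw0 hw1
      refine ⟨fun _ => a, fun _ => ha, ?_⟩
      simpa using hqa
    · obtain ⟨p, hpmem, hbound⟩ := ih hn1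
      set y := (n : ℝ)⁻¹ • ∑ i, p i with hy
      set e := x - y with he
      have hnne : (n : ℝ) ≠ 0 := Nat.cast_ne_zero.2 (by omega)
      -- choose the next point
      obtain ⟨a, ha, hqa⟩ := exists_le_avg P w
        (fun a => ‖(n : ℝ) • e + (x - a)‖ ^ 2) hw0 hw1
      -- compute the average value
      have havg : ∑ b ∈ P, w b * ‖(n : ℝ) • e + (x - b)‖ ^ 2
          = (n : ℝ) ^ 2 * ‖e‖ ^ 2 + σ2 := by
        have expand : ∀ b : E, ‖(n : ℝ) • e + (x - b)‖ ^ 2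
            = (n : ℝ) ^ 2 * ‖e‖ ^ 2 + 2 * (n : ℝ) * (inner ℝ e (x - b) : ℝ)
              + ‖x - b‖ ^ 2 := by
          intro b
          rw [@norm_add_sq_real, real_inner_smul_left, norm_smul]
          simp [Real.norm_eq_abs, mul_pow, sq_abs]
          ring
        calc ∑ b ∈ P, w b * ‖(n : ℝ) • e + (x - b)‖ ^ 2
            = ∑ b ∈ P, (w b * ((n : ℝ) ^ 2 * ‖e‖ ^ 2)
              + (2 * (n : ℝ)) * (w b * (inner ℝ e (x - b) : ℝ)) + w b * ‖x - b‖ ^ 2) := by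
              refine Finset.sum_congr rfl fun b _ => ?_
              rw [expand b]; ring
          _ = (∑ b ∈ P, w b) * ((n : ℝ) ^ 2 * ‖e‖ ^ 2)
              + (2 * (n : ℝ)) * (∑ b ∈ P, w b * (inner ℝ e (x - b) : ℝ)) + σ2 := by
              simp [Finset.sum_add_distrib, Finset.sum_mul, Finset.mul_sum, hσ2]
          _ = (n : ℝ) ^ 2 * ‖e‖ ^ 2 + σ2 := by rw [hw1, hinner]; ring
      refine ⟨Fin.snoc p a, fun i => ?_, ?_⟩
      · refine Fin.lastCases ?_ ?_ i
        · simpa using ha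
        · intro j; simpa using hpmem j
      · have hsum : ∑ i, (Fin.snoc p a : Fin (n+1) → E) i = (∑ i, p i) + a := by
          rw [Fin.sum_univ_castSucc]
          simp
        have hny : (n : ℝ) • y = ∑ i, p i := by
          rw [hy, smul_smul, mul_inv_cancel₀ hnne, one_smul]
        have h1 : ((n : ℝ) + 1) ≠ 0 := by positivity
        have hrepr : x - ((n : ℝ) + 1)⁻¹ • ∑ i, (Fin.snoc p a : Fin (n+1) → E) i
            = ((n : ℝ) + 1)⁻¹ • ((n : ℝ) • e + (x - a)) := by
          rw [hsum]
          refine smul_right_injective E h1 ?_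
          simp only [smul_sub, smul_smul, mul_inv_cancel₀ h1, one_smul]
          rw [he, smul_sub, hny]
          module
        have hcast : ((n + 1 : ℕ) : ℝ) = (n : ℝ) + 1 := by push_cast; ring
        rw [hcast, hrepr, norm_smul]
        have h1 : (0:ℝ) < (n : ℝ) + 1 := by positivity
        have hq2 : ‖(n : ℝ) • e + (x - a)‖ ^ 2 ≤ ((n : ℝ) + 1) * σ2 := by
          rw [havg] at hqa
          have : (n : ℝ) ^ 2 * ‖e‖ ^ 2 ≤ (n : ℝ) * σ2 := by
            have hn' : (0:ℝ) < n := by exact_mod_cast hn1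
            calc (n : ℝ) ^ 2 * ‖e‖ ^ 2 ≤ (n : ℝ) ^ 2 * (σ2 / n) := by
                  exact mul_le_mul_of_nonneg_left hbound (by positivity)
              _ = (n : ℝ) * σ2 := by field_simp
          nlinarith
        rw [Real.norm_eq_abs, abs_of_pos (inv_pos.2 h1), mul_pow]
        calc (((n : ℝ) + 1)⁻¹) ^ 2 * ‖(n : ℝ) • e + (x - a)‖ ^ 2
            ≤ (((n : ℝ) + 1)⁻¹) ^ 2 * (((n : ℝ) + 1) * σ2) :=
              mul_le_mul_of_nonneg_left hq2 (by positivity)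
          _ = σ2 / ((n : ℝ) + 1) := by field_simp

theorem approximate_caratheodory
    (d : ℕ) (P : Finset (EuclideanSpace ℝ (Fin d))) (hP : P.Nonempty)
    (ε : ℝ) (hε : ε ∈ Set.Ioo (0 : ℝ) 1)
    (x : EuclideanSpace ℝ (Fin d))
    (hx : x ∈ convexHull ℝ (↑P : Set (EuclideanSpace ℝ (Fin d)))) :
    ∃ (k : ℕ) (p : Fin k → EuclideanSpace ℝ (Fin d)) (α : Fin k → ℝ),
      k ≤ ⌈1 / ε ^ 2⌉₊ ∧
      (∀ i, p i ∈ P) ∧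
      (∀ i, 0 ≤ α i) ∧
      (∑ i, α i) = 1 ∧
      ‖x - ∑ i, α i • p i‖ ≤
        ε * Metric.diam (↑P : Set (EuclideanSpace ℝ (Fin d))) := by
  obtain ⟨hε0, hε1⟩ := hε
  set D := Metric.diam (↑P : Set (EuclideanSpace ℝ (Fin d))) with hD
  have hDnn : 0 ≤ D := Metric.diam_nonneg
  -- extract convex combination
  rw [Finset.convexHull_eq] at hx
  obtain ⟨w, hw0, hw1, hcm⟩ := hx
  have hxeq : ∑ a ∈ P, w a • a = x := by
    rw [← hcm, Finset.centerMass_eq_of_sum_1 _ _ hw1]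
    rfl
  -- bound distances to x by D
  have hdist : ∀ a ∈ P, ‖x - a‖ ≤ D := by
    intro a ha
    have hb : Bornology.IsBounded (convexHull ℝ (↑P : Set (EuclideanSpace ℝ (Fin d)))) :=
      isBounded_convexHull.2 (P.finite_toSet.isBounded)
    have hx' : x ∈ convexHull ℝ (↑P : Set (EuclideanSpace ℝ (Fin d))) := by
      rw [Finset.convexHull_eq]; exact ⟨w, hw0, hw1, hcm⟩
    have ha' : (a : EuclideanSpace ℝ (Fin d)) ∈
        convexHull ℝ (↑P : Set (EuclideanSpace ℝ (Fin d))) :=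
      subset_convexHull ℝ _ ha
    have := Metric.dist_le_diam_of_mem hb hx' ha'
    rw [convexHull_diam] at this
    rwa [dist_eq_norm] at this
  set k := ⌈1 / ε ^ 2⌉₊ with hk
  have hk1 : 1 ≤ k := Nat.one_le_ceil_iff.2 (by positivity)
  have hkge : 1 / ε ^ 2 ≤ (k : ℝ) := Nat.le_ceil _
  obtain ⟨p, hpmem, hbound⟩ := maurey P w hw0 hw1 x hxeq k hk1
  refine ⟨k, p, fun _ => (k : ℝ)⁻¹, le_refl _, hpmem, fun _ => by positivity, ?_, ?_⟩
  · simp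
    field_simp
  · have hks : ∑ i : Fin k, (k : ℝ)⁻¹ • p i = (k : ℝ)⁻¹ • ∑ i, p i :=
      (Finset.smul_sum).symm
    rw [hks]
    have hσ2 : (∑ a ∈ P, w a * ‖x - a‖ ^ 2) ≤ D ^ 2 := by
      calc ∑ a ∈ P, w a * ‖x - a‖ ^ 2 ≤ ∑ a ∈ P, w a * D ^ 2 := by
            refine Finset.sum_le_sum fun a ha => ?_
            exact mul_le_mul_of_nonneg_left
              (pow_le_pow_left₀ (norm_nonneg _) (hdist a ha) 2) (hw0 a ha)
        _ = D ^ 2 := by rw [← Finset.sum_mul, hw1, one_mul]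
    have hkpos : (0:ℝ) < k := by exact_mod_cast hk1
    have h2 : ‖x - (k : ℝ)⁻¹ • ∑ i, p i‖ ^ 2 ≤ (ε * D) ^ 2 := by
      calc ‖x - (k : ℝ)⁻¹ • ∑ i, p i‖ ^ 2 ≤ (∑ a ∈ P, w a * ‖x - a‖ ^ 2) / k := hbound
        _ ≤ D ^ 2 / k := by gcongr
        _ ≤ (ε * D) ^ 2 := by
            rw [div_le_iff₀ hkpos, mul_pow]
            have h1 : 1 ≤ ε ^ 2 * k := by
              have h := mul_le_mul_of_nonneg_left hkge
                (le_of_lt (by positivity : (0:ℝ) < ε ^ 2))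
              rwa [mul_one_div, div_self (by positivity : (ε:ℝ) ^ 2 ≠ 0)] at h
            nlinarith [sq_nonneg D]
    nlinarith [norm_nonneg (x - (k : ℝ)⁻¹ • ∑ i, p i), mul_nonneg hε0.le hDnn]
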